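/- Let f : ℝ → ℝ be continuous with f(x+1) - f(x) = l for all x, l a nonzero integer, and α irrational; define T(x,y) = (x+α, f(x)+y) on 𝕋². Then the regionally proximal relation of (𝕋², T) equals {((x,y₁),(x,y₂)) : x, y₁, y₂ ∈ 𝕋¹}. -/

import Mathlib

noncomputable section Aux

/-- lifted skew product on ℝ × ℝ -/
def Tlift (α : ℝ) (f : ℝ → ℝ) : Equiv.Perm (ℝ × ℝ) where
  toFun p := (p.1 + α, p.2 + f p.1)
  invFun p := (p.1 - α, p.2 - f (p.1 - α))
  left_inv p := by simp
  right_inv p := by simp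

/-- the cocycle -/
def cc (α : ℝ) (f : ℝ → ℝ) (n : ℤ) (x : ℝ) : ℝ := (((Tlift α f) ^ n) (x, 0)).2

variable (α : ℝ) (f : ℝ → ℝ)

lemma Tlift_apply (x y : ℝ) : (Tlift α f) (x, y) = (x + α, y + f x) := rfl

lemma Tlift_inv_apply (x y : ℝ) : (Tlift α f)⁻¹ (x, y) = (x - α, y - f (x - α)) := rfl

lemma Tlift_zpow (n : ℤ) : ∀ x y : ℝ, ((Tlift α f) ^ n) (x, y) = (x + n * α, y + cc α f n x) := by
  induction n using Int.induction_on with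
  | zero => intro x y; simp [cc]
  | succ n ih =>
      intro x y
      have key : ∀ y : ℝ, ((Tlift α f) ^ ((n : ℤ) + 1)) (x, y)
          = (x + α + ((n:ℤ):ℝ) * α, (y + f x) + cc α f (n : ℤ) (x + α)) := by
        intro y
        rw [zpow_add_one, Equiv.Perm.mul_apply, Tlift_apply, ih]
      have hc : cc α f ((n : ℤ) + 1) x = (0 + f x) + cc α f (n : ℤ) (x + α) := by
        rw [cc, key]
      rw [key, hc]
      congr 1 <;> push_cast <;> ring
  | pred n ih =>
      intro x y
      have key : ∀ y : ℝ, ((Tlift α f) ^ (-(n : ℤ) - 1)) (x, y)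
          = (x - α + ((-(n : ℤ) : ℤ):ℝ) * α, (y - f (x - α)) + cc α f (-(n : ℤ)) (x - α)) := by
        intro y
        rw [zpow_sub_one, Equiv.Perm.mul_apply, Equiv.Perm.inv_def, show (Tlift α f).symm (x,y) = (x - α, y - f (x - α)) from rfl, ih]
      have hc : cc α f (-(n : ℤ) - 1) x = (0 - f (x - α)) + cc α f (-(n : ℤ)) (x - α) := by
        rw [cc, key]
      rw [key, hc]
      congr 1 <;> push_cast <;> ring

lemma cc_zero (x : ℝ) : cc α f 0 x = 0 := by simp [cc]

lemma cc_cocycle (m n : ℤ) (x : ℝ) :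
    cc α f (m + n) x = cc α f n x + cc α f m (x + n * α) := by
  have h1 := Tlift_zpow α f (m + n) x 0
  have h2 : ((Tlift α f) ^ (m + n)) (x, 0)
      = (x + n * α + m * α, (0 + cc α f n x) + cc α f m (x + n * α)) := by
    rw [zpow_add, Equiv.Perm.mul_apply, Tlift_zpow, Tlift_zpow]
  have h3 := (h1.symm.trans h2)
  have := (Prod.mk.injEq _ _ _ _ ▸ h3 : _)
  have h4 : (0:ℝ) + cc α f (m+n) x = (0 + cc α f n x) + cc α f m (x + n * α) := congrArg Prod.snd h3
  linarith

lemma cc_one (x : ℝ) : cc α f 1 x = f x := by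
  simp [cc, Tlift_apply]

lemma cc_neg_one (x : ℝ) : cc α f (-1) x = -f (x - α) := by
  have : ((Tlift α f) ^ (-1 : ℤ)) (x, 0) = (Tlift α f)⁻¹ (x, 0) := by rw [zpow_neg_one]
  simp [cc, this, Tlift_inv_apply]

lemma cc_succ (n : ℤ) (x : ℝ) : cc α f (n + 1) x = f x + cc α f n (x + α) := by
  have := cc_cocycle α f n 1 x
  rw [cc_one] at this
  simpa [one_mul] using this

lemma cc_pred (n : ℤ) (x : ℝ) : cc α f (n - 1) x = -f (x - α) + cc α f n (x - α) := by
  have := cc_cocycle α f n (-1) x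
  rw [cc_neg_one] at this
  rw [show n + (-1) = n - 1 from by ring] at this
  rw [this]
  ring_nf

lemma cc_cont (hf : Continuous f) (n : ℤ) : Continuous (cc α f n) := by
  induction n using Int.induction_on with
  | zero =>
      have : cc α f 0 = fun _ => (0:ℝ) := funext fun x => cc_zero α f x
      rw [this]; exact continuous_const
  | succ n ih =>
      have : cc α f ((n:ℤ)+1) = fun x => f x + cc α f (n:ℤ) (x + α) :=
        funext fun x => cc_succ α f n x
      rw [this]
      exact hf.add (ih.comp (continuous_id.add continuous_const))
  | pred n ih =>
      have : cc α f (-(n:ℤ)-1) = fun x => -f (x - α) + cc α f (-(n:ℤ)) (x - α) :=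
        funext fun x => cc_pred α f (-(n:ℤ)) x
      rw [this]
      exact ((hf.comp (continuous_id.sub continuous_const)).neg).add
        (ih.comp (continuous_id.sub continuous_const))

variable {l : ℤ}

lemma f_add_one (hfl : ∀ x : ℝ, f (x + 1) - f x = l) (t : ℝ) : f (t + 1) = f t + l := by
  have := hfl t; linarith

lemma cc_add_one (hfl : ∀ x : ℝ, f (x + 1) - f x = l) :
    ∀ (n : ℤ) (x : ℝ), cc α f n (x + 1) = cc α f n x + (n : ℝ) * (l : ℝ) := by
  intro n
  induction n using Int.induction_on with
  | zero => intro x; simp [cc_zero]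
  | succ n ih =>
      intro x
      rw [cc_succ, cc_succ, f_add_one f hfl,
        show x + 1 + α = (x + α) + 1 from by ring, ih]
      push_cast; ring
  | pred n ih =>
      intro x
      rw [cc_pred α f (-(n:ℤ)) , show (-(n:ℤ) - 1) = -(n:ℤ) - 1 from rfl]
      rw [show x + 1 - α = (x - α) + 1 from by ring, f_add_one f hfl, ih]
      rw [cc_pred]
      push_cast; ring

lemma cc_add_int (hfl : ∀ x : ℝ, f (x + 1) - f x = l) :
    ∀ (j : ℤ) (n : ℤ) (x : ℝ), cc α f n (x + (j:ℝ)) = cc α f n x + (n : ℝ) * (j : ℝ) * (l : ℝ) := by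
  intro j
  induction j using Int.induction_on with
  | zero => intro n x; simp
  | succ j ih =>
      intro n x
      have h := ih n x
      have this1 : x + (((j:ℤ)+1 : ℤ) : ℝ) = (x + (j:ℝ)) + 1 := by push_cast; ring
      rw [this1, cc_add_one α f hfl]
      push_cast at h ⊢
      ring_nf at h ⊢
      linarith
  | pred j ih =>
      intro n x
      have h := ih n x
      have h1 : x + ((-(j:ℤ)-1 : ℤ) : ℝ) = (x + ((-(j:ℤ) : ℤ):ℝ)) - 1 := by push_cast; ring
      have h2 := cc_add_one α f hfl n ((x + ((-(j:ℤ) : ℤ):ℝ)) - 1)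
      rw [show (x + ((-(j:ℤ) : ℤ):ℝ)) - 1 + 1 = x + ((-(j:ℤ) : ℤ):ℝ) from by ring] at h2
      rw [h1]
      push_cast at h h2 ⊢
      ring_nf at h h2 ⊢
      linarith


lemma abs_triangle4 (A1 A0 B1 B0 : ℝ) (h5 : 5 ≤ |B1 - B0|) (h1 : |A1 - B1| < 1)
    (h0 : |A0 - B0| < 1) : 3 ≤ |A1 - A0| := by
  have e : |B1 - B0| = |(B1 - A1) + (A1 - A0) + (A0 - B0)| := by ring_nf
  have t1 := abs_add_le (B1 - A1 + (A1 - A0)) (A0 - B0)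
  have t2 := abs_add_le (B1 - A1) (A1 - A0)
  have t3 : |B1 - A1| = |A1 - B1| := abs_sub_comm _ _
  rw [e] at h5
  linarith

lemma main_var (l : ℤ) (hl : l ≠ 0) (α : ℝ) (hα : Irrational α) (f : ℝ → ℝ)
    (hf : Continuous f) (hfl : ∀ x : ℝ, f (x + 1) - f x = l) (x r : ℝ) (hr : 0 < r) :
    ∃ n : ℤ, ∃ s : ℝ, 0 < s ∧ s ≤ r ∧ 1 ≤ |cc α f n (x + s) - cc α f n x| := by
  classical
  set M : ℕ := max 1 ⌈1/r⌉₊ with hMdef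
  have hM1 : 1 ≤ M := le_max_left _ _
  have hMpos : (0:ℝ) < (M:ℝ) := by exact_mod_cast lt_of_lt_of_le one_pos hM1
  have hMr : 1 / r ≤ (M:ℝ) := by
    refine le_trans (Nat.le_ceil _) ?_
    exact_mod_cast le_max_right 1 ⌈1/r⌉₊
  set s₀ : ℝ := 1 / (M:ℝ) with hs₀def
  have hs₀pos : 0 < s₀ := by positivity
  have hs₀r : s₀ ≤ r := by
    have h := one_div_le_one_div_of_le (by positivity : (0:ℝ) < 1/r) hMr
    rwa [one_div_one_div] at h
  have hMs₀ : (M:ℝ) * s₀ = 1 := by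
    rw [hs₀def, mul_one_div_cancel hMpos.ne']
  set n₀ : ℤ := 5 * (M:ℤ) with hn₀def
  have habs : (5:ℝ) * (M:ℝ) ≤ |(n₀:ℝ) * (l:ℝ)| := by
    have hl1 : (1:ℝ) ≤ |(l:ℝ)| := by
      have := Int.one_le_abs hl
      calc (1:ℝ) = ((1:ℤ):ℝ) := by norm_num
        _ ≤ ((|l|:ℤ):ℝ) := by exact_mod_cast this
        _ = |(l:ℝ)| := by push_cast; ring
    have h0 : |(n₀:ℝ)| = 5 * (M:ℝ) := by
      rw [hn₀def]; push_cast
      rw [abs_of_nonneg (by positivity)]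
    calc (5:ℝ) * M = (5 * (M:ℝ)) * 1 := by ring
      _ ≤ |(n₀:ℝ)| * |(l:ℝ)| := by
          rw [h0]; exact mul_le_mul_of_nonneg_left hl1 (by positivity)
      _ = |(n₀:ℝ) * (l:ℝ)| := (abs_mul _ _).symm
  have htel : ∑ i ∈ Finset.range M,
      (cc α f n₀ (x + ((i:ℝ)+1) * s₀) - cc α f n₀ (x + (i:ℝ) * s₀)) = (n₀:ℝ) * (l:ℝ) := by
    have h := Finset.sum_range_sub (fun i : ℕ => cc α f n₀ (x + (i:ℝ) * s₀)) M
    have h2 : ∀ i : ℕ, cc α f n₀ (x + ((i+1:ℕ):ℝ) * s₀) = cc α f n₀ (x + ((i:ℝ)+1) * s₀) := by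
      intro i; congr 1; push_cast; ring
    calc ∑ i ∈ Finset.range M,
        (cc α f n₀ (x + ((i:ℝ)+1) * s₀) - cc α f n₀ (x + (i:ℝ) * s₀))
        = cc α f n₀ (x + (M:ℝ) * s₀) - cc α f n₀ (x + (0:ℝ) * s₀) := by
          rw [Nat.cast_zero] at h
          rw [← h]; apply Finset.sum_congr rfl; intro i _; rw [← h2 i]
      _ = (n₀:ℝ) * (l:ℝ) := by
          rw [hMs₀, zero_mul, add_zero, cc_add_one α f hfl]; ring
  have hpig : ∃ i ∈ Finset.range M,
      5 ≤ |cc α f n₀ (x + ((i:ℝ)+1) * s₀) - cc α f n₀ (x + (i:ℝ) * s₀)| := by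
    by_contra hcon
    push_neg at hcon
    have h1 := Finset.abs_sum_le_sum_abs
      (fun i : ℕ => cc α f n₀ (x + ((i:ℝ)+1) * s₀) - cc α f n₀ (x + (i:ℝ) * s₀)) (Finset.range M)
    have hne : (Finset.range M).Nonempty := ⟨0, Finset.mem_range.mpr (lt_of_lt_of_le one_pos hM1)⟩
    have h2 : ∑ i ∈ Finset.range M,
        |cc α f n₀ (x + ((i:ℝ)+1) * s₀) - cc α f n₀ (x + (i:ℝ) * s₀)|
        < ∑ _i ∈ Finset.range M, (5:ℝ) :=
      Finset.sum_lt_sum_of_nonempty hne fun i hi => hcon i hi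
    have h3 : ∑ _i ∈ Finset.range M, (5:ℝ) = 5 * (M:ℝ) := by
      simp [mul_comm]
    rw [htel] at h1
    rw [h3] at h2
    linarith
  obtain ⟨i, _, hdi⟩ := hpig
  set u : ℝ := x + (i:ℝ) * s₀ with hudef
  have hdi' : 5 ≤ |cc α f n₀ (u + s₀) - cc α f n₀ u| := by
    have harg : x + ((i:ℝ)+1) * s₀ = u + s₀ := by rw [hudef]; ring
    rwa [harg] at hdi
  have hcont := cc_cont α f hf n₀
  obtain ⟨η₁, hη₁pos, hη₁⟩ := Metric.continuousAt_iff.mp (hcont.continuousAt (x := u)) 1 one_pos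
  obtain ⟨η₂, hη₂pos, hη₂⟩ :=
    Metric.continuousAt_iff.mp (hcont.continuousAt (x := u + s₀)) 1 one_pos
  set η : ℝ := min η₁ η₂ with hηdef
  have hηpos : 0 < η := lt_min hη₁pos hη₂pos
  have hdense : ∃ m j : ℤ, |((m:ℝ) * α + (j:ℝ)) - (i:ℝ) * s₀| < η := by
    rcases AddSubgroup.dense_or_cyclic (AddSubgroup.closure {α, (1:ℝ)}) with hd | ⟨g₀, hgen⟩
    · obtain ⟨y, hy1, hy2⟩ := Metric.dense_iff.mp hd ((i:ℝ) * s₀) η hηpos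
      obtain ⟨m, j, hmj⟩ := AddSubgroup.mem_closure_pair.mp hy2
      refine ⟨m, j, ?_⟩
      have hy : (m:ℝ) * α + (j:ℝ) = y := by
        simpa [zsmul_eq_mul, mul_one] using hmj
      rw [hy]
      have := Metric.mem_ball.mp hy1
      rwa [Real.dist_eq, abs_sub_comm] at this
    · exfalso
      have hαS : α ∈ AddSubgroup.closure {α, (1:ℝ)} :=
        AddSubgroup.subset_closure (by simp)
      have h1S : (1:ℝ) ∈ AddSubgroup.closure {α, (1:ℝ)} :=
        AddSubgroup.subset_closure (by simp)
      rw [hgen] at hαS h1S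
      obtain ⟨m, hm⟩ := AddSubgroup.mem_closure_singleton.mp hαS
      obtain ⟨q, hq⟩ := AddSubgroup.mem_closure_singleton.mp h1S
      rw [zsmul_eq_mul] at hm hq
      have hq0 : (q:ℝ) ≠ 0 := by
        intro h
        rw [h, zero_mul] at hq
        exact one_ne_zero hq.symm
      have hqz : (q:ℚ) ≠ 0 := by
        intro h
        apply hq0
        exact_mod_cast congrArg (fun t : ℚ => (t:ℝ)) h
      apply hα
      refine ⟨(m:ℚ)/(q:ℚ), ?_⟩
      have hg₀ : g₀ = 1 / (q:ℝ) := by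
        field_simp
        linarith [hq]
      push_cast
      rw [← hm, hg₀]
      field_simp
  obtain ⟨m, j, hmj⟩ := hdense
  set β : ℝ := (m:ℝ) * α + (j:ℝ) with hβdef
  set u' : ℝ := x + β with hu'def
  have hu'u : |u' - u| < η := by
    have : u' - u = β - (i:ℝ) * s₀ := by rw [hu'def, hudef]; ring
    rw [this]
    exact hmj
  have hb1 : |cc α f n₀ u' - cc α f n₀ u| < 1 := by
    have h := hη₁ (x := u') (by rw [Real.dist_eq]; exact lt_of_lt_of_le hu'u (min_le_left _ _))
    rwa [Real.dist_eq] at h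
  have hb2 : |cc α f n₀ (u' + s₀) - cc α f n₀ (u + s₀)| < 1 := by
    have hd : dist (u' + s₀) (u + s₀) < η₂ := by
      rw [Real.dist_eq]
      have : u' + s₀ - (u + s₀) = u' - u := by ring
      rw [this]
      exact lt_of_lt_of_le hu'u (min_le_right _ _)
    have h := hη₂ hd
    rwa [Real.dist_eq] at h
  have hkey : ∀ s : ℝ, cc α f (n₀ + m) (x + s) - cc α f m (x + s)
      = cc α f n₀ ((x + s) + β) + (n₀:ℝ) * ((-j:ℤ):ℝ) * (l:ℝ) := by
    intro s
    have h1 := cc_cocycle α f n₀ m (x + s)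
    have harg : (x + s) + (m:ℝ) * α = ((x + s) + β) + ((-j:ℤ):ℝ) := by
      rw [hβdef]; push_cast; ring
    have h2 := cc_add_int α f hfl (-j) n₀ ((x + s) + β)
    rw [h1, harg, h2]
    ring
  have hA := hkey s₀
  have hB := hkey 0
  have hargA : (x + s₀) + β = u' + s₀ := by rw [hu'def]; ring
  have hargB : (x + 0) + β = u' := by rw [hu'def]; ring
  rw [hargA] at hA
  rw [hargB, add_zero] at hB
  have h3 : 3 ≤ |cc α f n₀ (u' + s₀) - cc α f n₀ u'| :=
    abs_triangle4 _ _ _ _ hdi' hb2 hb1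
  have h4 : 3 ≤ |(cc α f (n₀ + m) (x + s₀) - cc α f (n₀ + m) x)
      - (cc α f m (x + s₀) - cc α f m x)| := by
    have e : (cc α f (n₀ + m) (x + s₀) - cc α f (n₀ + m) x)
        - (cc α f m (x + s₀) - cc α f m x)
        = cc α f n₀ (u' + s₀) - cc α f n₀ u' := by linarith
    rw [e]
    exact h3
  by_cases hc : 1 ≤ |cc α f (n₀ + m) (x + s₀) - cc α f (n₀ + m) x|
  · exact ⟨n₀ + m, s₀, hs₀pos, hs₀r, hc⟩
  · push_neg at hc
    refine ⟨m, s₀, hs₀pos, hs₀r, ?_⟩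
    have t := abs_sub (cc α f (n₀ + m) (x + s₀) - cc α f (n₀ + m) x)
      (cc α f m (x + s₀) - cc α f m x)
    linarith

end Aux


abbrev Torus1 := AddCircle (1:ℝ)
abbrev Torus2 := Torus1 × Torus1

/-- The regionally proximal relation of `(X, T)` for an invertible system `T`:
`(p, q)` is regionally proximal iff for every `ε > 0` and all neighborhoods `U` of `p`
and `V` of `q` there are `p' ∈ U`, `q' ∈ V` and `n ∈ ℤ` with `dist (Tⁿ p') (Tⁿ q') < ε`. -/
def RegProx (T : Equiv.Perm Torus2) (p q : Torus2) : Prop :=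
  ∀ ε > (0:ℝ), ∀ U ∈ nhds p, ∀ V ∈ nhds q,
    ∃ p' ∈ U, ∃ q' ∈ V, ∃ n : ℤ, dist ((T ^ n) p') ((T ^ n) q') < ε

theorem stmt9 (l : ℤ) (hl : l ≠ 0) (α : ℝ) (hα : Irrational α)
    (f : ℝ → ℝ) (hf : Continuous f) (hfl : ∀ x : ℝ, f (x + 1) - f x = l)
    (F : Torus1 → Torus1) (hF : ∀ x : ℝ, F (x : Torus1) = ((f x : ℝ) : Torus1))
    (T : Equiv.Perm Torus2)
    (hT : ∀ p : Torus2, T p = (p.1 + (α : Torus1), F p.1 + p.2)) :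
    {pq : Torus2 × Torus2 | RegProx T pq.1 pq.2} =
      {pq : Torus2 × Torus2 | pq.1.1 = pq.2.1} := by
  have hsurj : ∀ z : Torus1, ∃ t : ℝ, (t : Torus1) = z := fun z =>
    QuotientAddGroup.mk_surjective z
  have hTinv : ∀ x y : ℝ, T⁻¹ ((x : Torus1), (y : Torus1))
      = (((x - α : ℝ) : Torus1), ((y - f (x - α) : ℝ) : Torus1)) := by
    intro x y
    have h1 : T (((x - α : ℝ) : Torus1), ((y - f (x - α) : ℝ) : Torus1))
        = ((x : Torus1), (y : Torus1)) := by
      rw [hT]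
      show (((x - α : ℝ) : Torus1) + (α : Torus1),
        F ((x - α : ℝ) : Torus1) + ((y - f (x - α) : ℝ) : Torus1)) = _
      rw [hF]
      refine Prod.ext ?_ ?_
      · show ((x - α + α : ℝ) : Torus1) = ((x : ℝ) : Torus1)
        congr 1; ring
      · show ((f (x - α) + (y - f (x - α)) : ℝ) : Torus1) = ((y : ℝ) : Torus1)
        congr 1; ring
    calc T⁻¹ ((x : Torus1), (y : Torus1))
        = T⁻¹ (T (((x - α : ℝ) : Torus1), ((y - f (x - α) : ℝ) : Torus1))) := by rw [h1]
      _ = (((x - α : ℝ) : Torus1), ((y - f (x - α) : ℝ) : Torus1)) := by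
          simp
  have key : ∀ (n : ℤ) (x y : ℝ), (T ^ n) ((x : Torus1), (y : Torus1))
      = (((x + (n : ℝ) * α : ℝ) : Torus1), ((y + cc α f n x : ℝ) : Torus1)) := by
    intro n
    induction n using Int.induction_on with
    | zero =>
        intro x y
        simp [cc_zero]
    | succ n ih =>
        intro x y
        have hstep : (T ^ ((n : ℤ) + 1)) ((x : Torus1), (y : Torus1))
            = (T ^ (n : ℤ)) (T ((x : Torus1), (y : Torus1))) := by
          rw [zpow_add_one]; rfl
        have e0 : T ((x : Torus1), (y : Torus1))
            = (((x + α : ℝ) : Torus1), ((f x + y : ℝ) : Torus1)) := by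
          rw [hT]
          show ((x : Torus1) + (α : Torus1), F (x : Torus1) + (y : Torus1)) = _
          rw [hF]
          rfl
        rw [hstep, e0, ih]
        have c1 : x + α + ((n : ℤ) : ℝ) * α = x + (((n : ℤ) + 1 : ℤ) : ℝ) * α := by
          push_cast; ring
        have c2 : f x + y + cc α f (n : ℤ) (x + α) = y + cc α f ((n : ℤ) + 1) x := by
          rw [cc_succ]; ring
        exact Prod.ext (congrArg (fun t : ℝ => (t : Torus1)) c1)
          (congrArg (fun t : ℝ => (t : Torus1)) c2)
    | pred n ih =>
        intro x y
        have hstep : (T ^ (-(n : ℤ) - 1)) ((x : Torus1), (y : Torus1))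
            = (T ^ (-(n : ℤ))) (T⁻¹ ((x : Torus1), (y : Torus1))) := by
          rw [zpow_sub_one]; rfl
        rw [hstep, hTinv, ih]
        have c1 : x - α + ((-(n : ℤ) : ℤ) : ℝ) * α = x + ((-(n : ℤ) - 1 : ℤ) : ℝ) * α := by
          push_cast; ring
        have c2 : y - f (x - α) + cc α f (-(n : ℤ)) (x - α) = y + cc α f (-(n : ℤ) - 1) x := by
          rw [cc_pred]; ring
        exact Prod.ext (congrArg (fun t : ℝ => (t : Torus1)) c1)
          (congrArg (fun t : ℝ => (t : Torus1)) c2)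
  ext pq
  obtain ⟨p, q⟩ := pq
  simp only [Set.mem_setOf_eq]
  constructor
  · -- RegProx → equal first coordinates
    intro hRP
    by_contra hne
    have hdpos : 0 < dist p.1 q.1 := dist_pos.mpr hne
    set d : ℝ := dist p.1 q.1 with hddef
    obtain ⟨p', hp', q', hq', n, hn⟩ := hRP (d/2) (by linarith)
      (Metric.ball p (d/4)) (Metric.ball_mem_nhds _ (by linarith))
      (Metric.ball q (d/4)) (Metric.ball_mem_nhds _ (by linarith))
    obtain ⟨x1, hx1⟩ := hsurj p'.1
    obtain ⟨y1, hy1⟩ := hsurj p'.2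
    obtain ⟨x2, hx2⟩ := hsurj q'.1
    obtain ⟨y2, hy2⟩ := hsurj q'.2
    have hp'eq : p' = ((x1 : Torus1), (y1 : Torus1)) := by rw [hx1, hy1]
    have hq'eq : q' = ((x2 : Torus1), (y2 : Torus1)) := by rw [hx2, hy2]
    rw [hp'eq, hq'eq, key n x1 y1, key n x2 y2] at hn
    have hfst : dist (((x1 + (n : ℝ) * α : ℝ)) : Torus1) (((x2 + (n : ℝ) * α : ℝ)) : Torus1)
        < d/2 := by
      refine lt_of_le_of_lt ?_ hn
      rw [Prod.dist_eq]
      exact le_max_left _ _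
    have heq : dist (((x1 + (n : ℝ) * α : ℝ)) : Torus1) (((x2 + (n : ℝ) * α : ℝ)) : Torus1)
        = dist ((x1 : ℝ) : Torus1) ((x2 : ℝ) : Torus1) := by
      have e1 : ((x1 + (n : ℝ) * α : ℝ) : Torus1)
          = ((x1 : ℝ) : Torus1) + (((n : ℝ) * α : ℝ) : Torus1) := rfl
      have e2 : ((x2 + (n : ℝ) * α : ℝ) : Torus1)
          = ((x2 : ℝ) : Torus1) + (((n : ℝ) * α : ℝ) : Torus1) := rfl
      rw [e1, e2, dist_add_right]
    rw [heq, hx1, hx2] at hfst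
    have h4 : dist p.1 p'.1 < d/4 := by
      have hb := Metric.mem_ball.mp hp'
      calc dist p.1 p'.1 = dist p'.1 p.1 := dist_comm _ _
        _ ≤ dist p' p := by rw [Prod.dist_eq]; exact le_max_left _ _
        _ < d/4 := hb
    have h5 : dist q'.1 q.1 < d/4 := by
      have hb := Metric.mem_ball.mp hq'
      calc dist q'.1 q.1 ≤ dist q' q := by rw [Prod.dist_eq]; exact le_max_left _ _
        _ < d/4 := hb
    have h6 := dist_triangle4 p.1 p'.1 q'.1 q.1
    rw [← hddef] at h6
    linarith
  · -- equal first coordinates → RegProx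
    intro hpq ε hε U hU V hV
    obtain ⟨x, hx⟩ := hsurj p.1
    obtain ⟨v₁, hv₁⟩ := hsurj p.2
    obtain ⟨v₂, hv₂⟩ := hsurj q.2
    obtain ⟨r, hrpos, hrV⟩ := Metric.mem_nhds_iff.mp hV
    set r₀ : ℝ := min r ε with hr₀def
    have hr₀pos : 0 < r₀ := lt_min hrpos hε
    obtain ⟨n, s, hspos, hsle, hs1⟩ := main_var l hl α hα f hf hfl x (r₀/2) (by positivity)
    have hDcont : ContinuousOn (fun t => cc α f n (x + t) - cc α f n x) (Set.Icc 0 s) :=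
      (((cc_cont α f hf n).comp (continuous_const.add continuous_id)).sub
        continuous_const).continuousOn
    have hτ : ∃ δ ∈ Set.Icc (0:ℝ) s, ∃ k : ℤ,
        cc α f n (x + δ) - cc α f n x = (v₁ - v₂) + (k : ℝ) := by
      rcases le_or_gt 1 (cc α f n (x + s) - cc α f n x) with hcase | hcase
      · have himg := intermediate_value_Icc (le_of_lt hspos) hDcont
        rw [show cc α f n (x + 0) - cc α f n x = 0 by simp] at himg
        obtain ⟨δ, hδ, hDδ⟩ := himg ⟨Int.fract_nonneg (v₁ - v₂),
          le_trans (le_of_lt (Int.fract_lt_one (v₁ - v₂))) hcase⟩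
        change cc α f n (x + δ) - cc α f n x = Int.fract (v₁ - v₂) at hDδ
        refine ⟨δ, hδ, -⌊v₁ - v₂⌋, ?_⟩
        rw [hDδ, Int.fract]
        push_cast
        ring
      · have hcase2 : cc α f n (x + s) - cc α f n x ≤ -1 := by
          rcases le_abs.mp hs1 with h' | h'
          · linarith
          · linarith
        have himg := intermediate_value_Icc' (le_of_lt hspos) hDcont
        rw [show cc α f n (x + 0) - cc α f n x = 0 by simp] at himg
        obtain ⟨δ, hδ, hDδ⟩ := himg (show Int.fract (v₁ - v₂) - 1 ∈
            Set.Icc (cc α f n (x + s) - cc α f n x) (0:ℝ) from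
          ⟨by linarith [Int.fract_nonneg (v₁ - v₂)], by linarith [Int.fract_lt_one (v₁ - v₂)]⟩)
        change cc α f n (x + δ) - cc α f n x = Int.fract (v₁ - v₂) - 1 at hDδ
        refine ⟨δ, hδ, -⌊v₁ - v₂⌋ - 1, ?_⟩
        rw [hDδ, Int.fract]
        push_cast
        ring
    obtain ⟨δ, ⟨hδ0, hδs⟩, k, hk⟩ := hτ
    have hδabs : |δ| ≤ s := by rw [abs_of_nonneg hδ0]; exact hδs
    have hpeq : p = ((x : Torus1), (v₁ : Torus1)) := by rw [hx, hv₁]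
    have hqeq : q = ((x : Torus1), (v₂ : Torus1)) := by rw [hx, hpq, hv₂]
    refine ⟨p, mem_of_mem_nhds hU, (((x + δ : ℝ) : Torus1), (v₂ : Torus1)), ?_, n, ?_⟩
    · apply hrV
      rw [Metric.mem_ball, hqeq, Prod.dist_eq]
      apply max_lt
      · have e : ((x + δ : ℝ) : Torus1) = ((x : ℝ) : Torus1) + ((δ : ℝ) : Torus1) := rfl
        rw [e, dist_self_add_left]
        have hnle : ‖((δ : ℝ) : Torus1)‖ ≤ |δ| := by
          simpa using QuotientAddGroup.norm_mk_le_norm (S := AddSubgroup.zmultiples (1:ℝ)) (m := δ)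
        have : s < r := by
          have : r₀ ≤ r := min_le_left _ _
          linarith
        linarith [le_trans hnle hδabs]
      · rw [dist_self]; linarith
    · rw [hpeq, key n x v₁, key n (x + δ) v₂]
      have hsnd : ((v₂ + cc α f n (x + δ) : ℝ) : Torus1)
          = ((v₁ + cc α f n x : ℝ) : Torus1) := by
        have e : v₂ + cc α f n (x + δ) = (v₁ + cc α f n x) + (k : ℝ) := by linarith
        have hk0 : (((k : ℝ)) : Torus1) = 0 := by
          rw [AddCircle.coe_eq_zero_iff]
          exact ⟨k, by simp⟩
        calc ((v₂ + cc α f n (x + δ) : ℝ) : Torus1)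
            = (((v₁ + cc α f n x) + (k : ℝ) : ℝ) : Torus1) := by rw [e]
          _ = ((v₁ + cc α f n x : ℝ) : Torus1) + (((k : ℝ)) : Torus1) := rfl
          _ = ((v₁ + cc α f n x : ℝ) : Torus1) := by rw [hk0, add_zero]
      rw [hsnd, Prod.dist_eq]
      apply max_lt
      · have e : ((x + δ + (n : ℝ) * α : ℝ) : Torus1)
            = ((x + (n : ℝ) * α : ℝ) : Torus1) + ((δ : ℝ) : Torus1) := by
          rw [show x + δ + (n : ℝ) * α = x + (n : ℝ) * α + δ by ring]
          rfl
        rw [e, dist_self_add_right]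
        have hnle : ‖((δ : ℝ) : Torus1)‖ ≤ |δ| := by
          simpa using QuotientAddGroup.norm_mk_le_norm (S := AddSubgroup.zmultiples (1:ℝ)) (m := δ)
        have : s < ε := by
          have : r₀ ≤ ε := min_le_right _ _
          linarith
        linarith [le_trans hnle hδabs]
      · rw [dist_self]; linarith
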